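/- arXiv:0910.1575 — 3 statements merged into one kernel-verified Lean document; each statement's English description precedes it below -/
import Mathlib

section
/- Let n > 2 and e be natural numbers, and suppose that every finite simple graph with n vertices and at most e edges is 2-apex. Then: (1) every finite simple graph with n+1 vertices and at most e+1 edges that has a vertex of degree 1 or degree 2 is 2-apex; and (2) every finite simple graph with n+1 vertices and at most e edges that has a vertex of degree 0 is 2-apex. -/
/-- `H` is a minor of `G`: there are pairwise disjoint nonempty connected branch sets
in `G`, one for each vertex of `H`, with an edge of `G` between the branch sets of
any two vertices adjacent in `H`. -/
def SimpleGraph.IsMinor {W V : Type*} (H : SimpleGraph W) (G : SimpleGraph V) : Prop :=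
  ∃ f : W → Set V,
    (∀ w, (f w).Nonempty) ∧
    (∀ w, (G.induce (f w)).Connected) ∧
    (Pairwise fun w₁ w₂ => Disjoint (f w₁) (f w₂)) ∧
    ∀ ⦃w₁ w₂⦄, H.Adj w₁ w₂ → ∃ v₁ ∈ f w₁, ∃ v₂ ∈ f w₂, G.Adj v₁ v₂

/-- A graph is planar iff it has no `K₅` minor and no `K₃,₃` minor (Kuratowski–Wagner). -/
def SimpleGraph.IsPlanar {V : Type*} (G : SimpleGraph V) : Prop :=
  ¬ (⊤ : SimpleGraph (Fin 5)).IsMinor G ∧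
  ¬ (completeBipartiteGraph (Fin 3) (Fin 3)).IsMinor G

/-- A graph is 2-apex if it becomes planar after deleting at most two vertices. -/
def SimpleGraph.TwoApex {V : Type*} (G : SimpleGraph V) : Prop :=
  ∃ s : Set V, s.ncard ≤ 2 ∧ (G.induce sᶜ).IsPlanar

private lemma first_step {α : Type*} (G : SimpleGraph α) {a b : α}
    (h : G.Reachable a b) (hab : a ≠ b) : ∃ z, G.Adj a z := by
  obtain ⟨p⟩ := h
  cases p with
  | nil => exact absurd rfl hab
  | cons h q => exact ⟨_, h⟩

private lemma walk_transfer {V : Type*} {G₁ G₂ : SimpleGraph V} {v : V} {S : Set V}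
    (hsub : ∀ x y, G₁.Adj x y → x ≠ v → y ≠ v → G₂.Adj x y)
    (hedge' : ∀ x y, x ≠ y → G₁.Adj v x → G₁.Adj v y → G₂.Adj x y) :
    ∀ (m : ℕ) (x y : ↥S) (w : (G₁.induce S).Walk x y), w.length ≤ m →
      ∀ (hx : x.1 ≠ v) (hy : y.1 ≠ v),
      (G₂.induce (S \ {v})).Reachable ⟨x.1, ⟨x.2, hx⟩⟩ ⟨y.1, ⟨y.2, hy⟩⟩ := by
  intro m
  induction m with
  | zero =>
    intro x y w hw hx hy
    cases w with
    | nil => exact SimpleGraph.Reachable.refl _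
    | cons h q => simp at hw
  | succ m ih =>
    intro x y w hw hx hy
    cases w with
    | nil => exact SimpleGraph.Reachable.refl _
    | cons h q =>
      rename_i z
      have h1 : G₁.Adj x.1 z.1 := h
      by_cases hz : z.1 = v
      · cases q with
        | nil => exact absurd hz hy
        | cons h' q' =>
          rename_i z'
          have h2 : G₁.Adj z.1 z'.1 := h'
          rw [hz] at h1 h2
          have hz'v : z'.1 ≠ v := h2.ne'
          have hlen : q'.length ≤ m := by
            simp [SimpleGraph.Walk.length_cons] at hw; omega
          have tail := ih z' y q' hlen hz'v hy
          by_cases hxz : x.1 = z'.1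
          · have hxx : (⟨x.1, ⟨x.2, hx⟩⟩ : ↥(S \ {v})) = ⟨z'.1, ⟨z'.2, hz'v⟩⟩ :=
              Subtype.ext hxz
            rw [hxx]; exact tail
          · have hadj : G₂.Adj x.1 z'.1 := hedge' x.1 z'.1 hxz h1.symm h2
            have step : (G₂.induce (S \ {v})).Adj ⟨x.1, ⟨x.2, hx⟩⟩ ⟨z'.1, ⟨z'.2, hz'v⟩⟩ := hadj
            exact step.reachable.trans tail
      · have hadj : G₂.Adj x.1 z.1 := hsub x.1 z.1 h1 hx hz
        have hlen : q.length ≤ m := by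
          simp [SimpleGraph.Walk.length_cons] at hw; omega
        have step : (G₂.induce (S \ {v})).Adj ⟨x.1, ⟨x.2, hx⟩⟩ ⟨z.1, ⟨z.2, hz⟩⟩ := hadj
        exact step.reachable.trans (ih z y q hlen hz hy)

private lemma connected_transfer {V : Type*} {G₁ G₂ : SimpleGraph V} {v : V} {S : Set V}
    (hsub : ∀ x y, G₁.Adj x y → x ≠ v → y ≠ v → G₂.Adj x y)
    (hedge' : ∀ x y, x ≠ y → G₁.Adj v x → G₁.Adj v y → G₂.Adj x y)
    (hc : (G₁.induce S).Connected) (hne : (S \ {v}).Nonempty) :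
    (G₂.induce (S \ {v})).Connected := by
  rw [SimpleGraph.connected_iff]
  refine ⟨fun a b => ?_, hne.to_subtype⟩
  obtain ⟨p⟩ := hc.preconnected ⟨a.1, a.2.1⟩ ⟨b.1, b.2.1⟩
  exact walk_transfer hsub hedge' p.length _ _ p le_rfl a.2.2 b.2.2

private lemma minor_transfer {W V : Type*} {H : SimpleGraph W} {G₁ G₂ : SimpleGraph V} {v : V}
    (hdeg : ∀ w, ∃ a b c, H.Adj w a ∧ H.Adj w b ∧ H.Adj w c ∧ a ≠ b ∧ a ≠ c ∧ b ≠ c)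
    (hsub : ∀ x y, G₁.Adj x y → x ≠ v → y ≠ v → G₂.Adj x y)
    (htwo : ∀ x y z, G₁.Adj v x → G₁.Adj v y → G₁.Adj v z → x = y ∨ x = z ∨ y = z)
    (hedge' : ∀ x y, x ≠ y → G₁.Adj v x → G₁.Adj v y → G₂.Adj x y)
    (h : H.IsMinor G₁) : H.IsMinor G₂ := by
  obtain ⟨f, hne, hconn, hdisj, hadj⟩ := h
  have hns : ∀ w, f w ≠ {v} := by
    intro w hw
    obtain ⟨a, b, c, ha, hb, hc, hab, hac, hbc⟩ := hdeg w
    obtain ⟨x1, hx1, xa, hxa, haxa⟩ := hadj ha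
    obtain ⟨x2, hx2, xb, hxb, hbxb⟩ := hadj hb
    obtain ⟨x3, hx3, xc, hxc, hcxc⟩ := hadj hc
    rw [hw] at hx1 hx2 hx3
    rw [Set.mem_singleton_iff] at hx1 hx2 hx3
    rw [hx1] at haxa; rw [hx2] at hbxb; rw [hx3] at hcxc
    have dab : xa ≠ xb := fun hh => Set.disjoint_left.mp (hdisj hab) hxa (hh ▸ hxb)
    have dac : xa ≠ xc := fun hh => Set.disjoint_left.mp (hdisj hac) hxa (hh ▸ hxc)
    have dbc : xb ≠ xc := fun hh => Set.disjoint_left.mp (hdisj hbc) hxb (hh ▸ hxc)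
    rcases htwo xa xb xc haxa hbxb hcxc with hh | hh | hh
    · exact dab hh
    · exact dac hh
    · exact dbc hh
  have hy2 : ∀ w, v ∈ f w → ∃ y ∈ f w, y ≠ v := by
    intro w hv
    by_contra hcon
    push_neg at hcon
    exact hns w (Set.eq_singleton_iff_unique_mem.mpr ⟨hv, hcon⟩)
  have hne' : ∀ w, (f w \ {v}).Nonempty := by
    intro w
    obtain ⟨x, hx⟩ := hne w
    by_cases hxv : x = v
    · subst hxv
      obtain ⟨y, hy, hyv⟩ := hy2 w hx
      exact ⟨y, hy, hyv⟩
    · exact ⟨x, hx, hxv⟩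
  have hv_in : ∀ w, v ∈ f w → ∃ x, x ∈ f w ∧ x ≠ v ∧ G₁.Adj v x := by
    intro w hv
    obtain ⟨y, hy, hyv⟩ := hy2 w hv
    have hr := (hconn w).preconnected ⟨v, hv⟩ ⟨y, hy⟩
    obtain ⟨z, hz⟩ := first_step _ hr (fun hh => hyv (congrArg Subtype.val hh).symm)
    have hz' : G₁.Adj v z.1 := hz
    exact ⟨z.1, z.2, hz'.ne', hz'⟩
  refine ⟨fun w => f w \ {v}, hne', ?_, ?_, ?_⟩
  · intro w
    exact connected_transfer hsub hedge' (hconn w) (hne' w)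
  · intro w₁ w₂ hww
    exact (hdisj hww).mono Set.diff_subset Set.diff_subset
  · intro w₁ w₂ hww
    obtain ⟨a, ha, b, hb, hab⟩ := hadj hww
    by_cases hav : a = v
    · rw [hav] at hab ha
      have hbv : b ≠ v := hab.ne'
      obtain ⟨x, hx, hxv, hvx⟩ := hv_in w₁ ha
      have hxb : x ≠ b := fun hh => Set.disjoint_left.mp (hdisj hww.ne) hx (hh ▸ hb)
      exact ⟨x, ⟨hx, hxv⟩, b, ⟨hb, hbv⟩, hedge' x b hxb hvx hab⟩
    · by_cases hbv : b = v
      · rw [hbv] at hab hb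
        have hav' : a ≠ v := hab.ne
        obtain ⟨x, hx, hxv, hvx⟩ := hv_in w₂ hb
        have hax : x ≠ a := fun hh => Set.disjoint_left.mp (hdisj hww.ne.symm) hx (hh ▸ ha)
        exact ⟨a, ⟨ha, hav'⟩, x, ⟨hx, hxv⟩, (hedge' x a hax hvx hab.symm).symm⟩
      · exact ⟨a, ⟨ha, hav⟩, b, ⟨hb, hbv⟩, hsub a b hab hav hbv⟩

private lemma walk_transfer2 {V V₂ : Type*} {G : SimpleGraph V} (φ : V ↪ V₂) {S : Set V₂} :
    ∀ (m : ℕ) (a b : ↥S) (w : ((SimpleGraph.map φ G).induce S).Walk a b), w.length ≤ m →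
      ∀ (x y : V) (hx : φ x ∈ S) (hy : φ y ∈ S), φ x = a.1 → φ y = b.1 →
      (G.induce (φ ⁻¹' S)).Reachable ⟨x, hx⟩ ⟨y, hy⟩ := by
  intro m
  induction m with
  | zero =>
    intro a b w hw x y hx hy hxa hyb
    cases w with
    | nil =>
      have hxy : x = y := φ.injective (hxa.trans hyb.symm)
      subst hxy
      exact SimpleGraph.Reachable.refl _
    | cons h q => simp at hw
  | succ m ih =>
    intro a b w hw x y hx hy hxa hyb
    cases w with
    | nil =>
      have hxy : x = y := φ.injective (hxa.trans hyb.symm)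
      subst hxy
      exact SimpleGraph.Reachable.refl _
    | cons h q =>
      rename_i z
      have h' : (SimpleGraph.map φ G).Adj a.1 z.1 := h
      rw [SimpleGraph.map_adj] at h'
      obtain ⟨p, r, hpr, hp, hr⟩ := h'
      have hpx : p = x := φ.injective (hp.trans hxa.symm)
      subst hpx
      have hrS : φ r ∈ S := by rw [hr]; exact z.2
      have hlen : q.length ≤ m := by
        simp [SimpleGraph.Walk.length_cons] at hw; omega
      have step : (G.induce (φ ⁻¹' S)).Adj ⟨p, hx⟩ ⟨r, hrS⟩ := hpr
      exact step.reachable.trans (ih z b q hlen r y hrS hy hr hyb)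

private lemma minor_unmap {W V V₂ : Type*} {H : SimpleGraph W} {G : SimpleGraph V} (φ : V ↪ V₂)
    (hdeg : ∀ w, ∃ a, H.Adj w a)
    (h : H.IsMinor (SimpleGraph.map φ G)) : H.IsMinor G := by
  obtain ⟨f, hne, hconn, hdisj, hadj⟩ := h
  have hmem : ∀ w, ∃ x, φ x ∈ f w := by
    intro w
    obtain ⟨a, ha⟩ := hdeg w
    obtain ⟨v₁, hv₁, v₂, hv₂, hadj'⟩ := hadj ha
    rw [SimpleGraph.map_adj] at hadj'
    obtain ⟨p, r, _, hp, hr⟩ := hadj'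
    exact ⟨p, hp ▸ hv₁⟩
  refine ⟨fun w => φ ⁻¹' f w, fun w => hmem w, ?_, ?_, ?_⟩
  · intro w
    rw [SimpleGraph.connected_iff]
    constructor
    · intro a b
      obtain ⟨p⟩ := (hconn w).preconnected ⟨φ a.1, a.2⟩ ⟨φ b.1, b.2⟩
      exact walk_transfer2 φ p.length _ _ p le_rfl a.1 b.1 a.2 b.2 rfl rfl
    · obtain ⟨x, hx⟩ := hmem w
      exact ⟨⟨x, hx⟩⟩
  · intro w₁ w₂ hww
    exact Disjoint.preimage _ (hdisj hww)
  · intro w₁ w₂ hww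
    obtain ⟨v₁, hv₁, v₂, hv₂, hadj'⟩ := hadj hww
    rw [SimpleGraph.map_adj] at hadj'
    obtain ⟨p, r, hpr, hp, hr⟩ := hadj'
    exact ⟨p, by rw [Set.mem_preimage, hp]; exact hv₁, r, by rw [Set.mem_preimage, hr]; exact hv₂, hpr⟩

private lemma count1 {V : Type} [Fintype V] (G : SimpleGraph V) (v : V) :
    (G.comap (Subtype.val : {x : V // x ≠ v} → V)).edgeSet.ncard
      + (G.neighborSet v).ncard ≤ G.edgeSet.ncard := by
  classical
  set A := Sym2.map (Subtype.val : {x : V // x ≠ v} → V) ''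
    (G.comap (Subtype.val : {x : V // x ≠ v} → V)).edgeSet with hA
  set B := (fun x => s(v, x)) '' G.neighborSet v with hB
  have hAsub : A ⊆ G.edgeSet := by
    rintro e ⟨e', he', rfl⟩
    revert he'
    induction e' using Sym2.ind with
    | _ a b =>
      intro he'
      rw [Sym2.map_pair_eq, SimpleGraph.mem_edgeSet]
      rw [SimpleGraph.mem_edgeSet] at he'
      exact he'
  have hBsub : B ⊆ G.edgeSet := by
    rintro e ⟨x, hx, rfl⟩
    rwa [SimpleGraph.mem_edgeSet]
  have hdisjAB : Disjoint A B := by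
    rw [Set.disjoint_left]
    rintro e ⟨e', he', rfl⟩ ⟨x, hx, hxe⟩
    revert hxe
    induction e' using Sym2.ind with
    | _ a b =>
      rw [Sym2.map_pair_eq]
      intro hxe
      rw [Sym2.eq_iff] at hxe
      rcases hxe with ⟨h1, _⟩ | ⟨h2, _⟩
      · exact a.2 h1.symm
      · exact b.2 h2.symm
  have hcardA : A.ncard = (G.comap (Subtype.val : {x : V // x ≠ v} → V)).edgeSet.ncard :=
    Set.ncard_image_of_injective _ (Sym2.map.injective Subtype.val_injective)
  have hcardB : B.ncard = (G.neighborSet v).ncard := by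
    apply Set.ncard_image_of_injective
    intro x y hxy
    exact (Sym2.congr_right).mp hxy
  calc (G.comap (Subtype.val : {x : V // x ≠ v} → V)).edgeSet.ncard + (G.neighborSet v).ncard
      = A.ncard + B.ncard := by rw [hcardA, hcardB]
    _ = (A ∪ B).ncard := (Set.ncard_union_eq hdisjAB (Set.toFinite A) (Set.toFinite B)).symm
    _ ≤ G.edgeSet.ncard := Set.ncard_le_ncard (Set.union_subset hAsub hBsub) (Set.toFinite _)

private lemma hdegK5 : ∀ w : Fin 5, ∃ a b c, (⊤ : SimpleGraph (Fin 5)).Adj w a ∧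
    (⊤ : SimpleGraph (Fin 5)).Adj w b ∧ (⊤ : SimpleGraph (Fin 5)).Adj w c ∧
    a ≠ b ∧ a ≠ c ∧ b ≠ c := by decide

private lemma hdegK33 : ∀ w : Fin 3 ⊕ Fin 3, ∃ a b c,
    (completeBipartiteGraph (Fin 3) (Fin 3)).Adj w a ∧
    (completeBipartiteGraph (Fin 3) (Fin 3)).Adj w b ∧
    (completeBipartiteGraph (Fin 3) (Fin 3)).Adj w c ∧
    a ≠ b ∧ a ≠ c ∧ b ≠ c := by
  intro w
  rcases w with i | i
  · exact ⟨Sum.inr 0, Sum.inr 1, Sum.inr 2, by simp, by simp, by simp, by simp, by simp, by simp⟩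
  · exact ⟨Sum.inl 0, Sum.inl 1, Sum.inl 2, by simp, by simp, by simp, by simp, by simp, by simp⟩

private lemma key (n e : ℕ)
    (H : ∀ (V : Type) [Fintype V] (G : SimpleGraph V),
      Fintype.card V = n → G.edgeSet.ncard ≤ e → G.TwoApex)
    (V : Type) [Fintype V] (G : SimpleGraph V)
    (hcard : Fintype.card V = n + 1)
    (v u₁ u₂ : V) (h₁ : u₁ ≠ v) (h₂ : u₂ ≠ v)
    (hnbr : ∀ x, G.Adj v x → x = u₁ ∨ x = u₂)
    (hE : ((G.comap (Subtype.val : {x : V // x ≠ v} → V)) ⊔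
        SimpleGraph.fromEdgeSet {s((⟨u₁, h₁⟩ : {x : V // x ≠ v}),
          (⟨u₂, h₂⟩ : {x : V // x ≠ v}))}).edgeSet.ncard ≤ e) :
    G.TwoApex := by
  classical
  set G' := (G.comap (Subtype.val : {x : V // x ≠ v} → V)) ⊔
      SimpleGraph.fromEdgeSet {s((⟨u₁, h₁⟩ : {x : V // x ≠ v}),
        (⟨u₂, h₂⟩ : {x : V // x ≠ v}))} with hG'def
  have hcV' : Fintype.card {x : V // x ≠ v} = n := by
    have h0 := Fintype.card_subtype_compl (fun x : V => x = v)
    rw [Fintype.card_subtype_eq, hcard] at h0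
    simpa using h0
  obtain ⟨s, hs2, hplanar⟩ := H {x : V // x ≠ v} G' hcV' hE
  set s' : Set V := Subtype.val '' s with hs'def
  have hvs' : v ∈ s'ᶜ := by
    rintro ⟨x, _, hx⟩
    exact x.2 hx
  have hmm : ∀ (x : {x : V // x ≠ v}), x ∈ sᶜ → x.1 ∈ s'ᶜ := by
    rintro x hx ⟨y, hy, hyx⟩
    exact hx (Subtype.val_injective hyx ▸ hy)
  have hmm2 : ∀ (x : V) (hxv : x ≠ v), x ∈ s'ᶜ → (⟨x, hxv⟩ : {x : V // x ≠ v}) ∈ sᶜ := by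
    intro x hxv hx hmem
    exact hx ⟨⟨x, hxv⟩, hmem, rfl⟩
  let φ : ↥sᶜ ↪ ↥s'ᶜ := ⟨fun x => ⟨x.1.1, hmm x.1 x.2⟩, by
    intro a b hab
    have hab' : (⟨a.1.1, hmm a.1 a.2⟩ : ↥s'ᶜ) = ⟨b.1.1, hmm b.1 b.2⟩ := hab
    have h3 : a.1.1 = b.1.1 := congrArg (Subtype.val : ↥s'ᶜ → V) hab'
    exact Subtype.ext (Subtype.ext h3)⟩
  set G₂ := SimpleGraph.map φ (G'.induce sᶜ) with hG₂def
  set v' : ↥s'ᶜ := ⟨v, hvs'⟩ with hv'def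
  have hsub : ∀ x y : ↥s'ᶜ, (G.induce s'ᶜ).Adj x y → x ≠ v' → y ≠ v' → G₂.Adj x y := by
    intro x y hxy hxv hyv
    have hx1 : x.1 ≠ v := fun hh => hxv (Subtype.ext hh)
    have hy1 : y.1 ≠ v := fun hh => hyv (Subtype.ext hh)
    rw [hG₂def, SimpleGraph.map_adj]
    refine ⟨⟨⟨x.1, hx1⟩, hmm2 x.1 hx1 x.2⟩, ⟨⟨y.1, hy1⟩, hmm2 y.1 hy1 y.2⟩, ?_,
      Subtype.ext rfl, Subtype.ext rfl⟩
    show G'.Adj _ _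
    rw [hG'def, SimpleGraph.sup_adj]
    exact Or.inl (show G.Adj x.1 y.1 from hxy)
  have htwo : ∀ x y z : ↥s'ᶜ, (G.induce s'ᶜ).Adj v' x → (G.induce s'ᶜ).Adj v' y →
      (G.induce s'ᶜ).Adj v' z → x = y ∨ x = z ∨ y = z := by
    intro x y z hx hy hz
    have hx' : G.Adj v x.1 := hx
    have hy' : G.Adj v y.1 := hy
    have hz' : G.Adj v z.1 := hz
    rcases hnbr x.1 hx' with e1 | e1 <;> rcases hnbr y.1 hy' with e2 | e2 <;>
      rcases hnbr z.1 hz' with e3 | e3 <;>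
      first
        | exact Or.inl (Subtype.ext (e1.trans e2.symm))
        | exact Or.inr (Or.inl (Subtype.ext (e1.trans e3.symm)))
        | exact Or.inr (Or.inr (Subtype.ext (e2.trans e3.symm)))
  have hedge' : ∀ x y : ↥s'ᶜ, x ≠ y → (G.induce s'ᶜ).Adj v' x → (G.induce s'ᶜ).Adj v' y →
      G₂.Adj x y := by
    intro x y hxy hvx hvy
    have hx' : G.Adj v x.1 := hvx
    have hy' : G.Adj v y.1 := hvy
    have hx1 : x.1 ≠ v := hx'.ne'
    have hy1 : y.1 ≠ v := hy'.ne'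
    have hxy1 : x.1 ≠ y.1 := fun hh => hxy (Subtype.ext hh)
    have hedgeG' : G'.Adj ⟨x.1, hx1⟩ ⟨y.1, hy1⟩ := by
      rw [hG'def, SimpleGraph.sup_adj]
      right
      rw [SimpleGraph.fromEdgeSet_adj]
      refine ⟨?_, fun hh => hxy1 (congrArg (Subtype.val : {x : V // x ≠ v} → V) hh)⟩
      rw [Set.mem_singleton_iff]
      rcases hnbr x.1 hx' with e1 | e1 <;> rcases hnbr y.1 hy' with e2 | e2
      · exact absurd (e1.trans e2.symm) hxy1
      · rw [show (⟨x.1, hx1⟩ : {x : V // x ≠ v}) = ⟨u₁, h₁⟩ from Subtype.ext e1,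
          show (⟨y.1, hy1⟩ : {x : V // x ≠ v}) = ⟨u₂, h₂⟩ from Subtype.ext e2]
      · rw [show (⟨x.1, hx1⟩ : {x : V // x ≠ v}) = ⟨u₂, h₂⟩ from Subtype.ext e1,
          show (⟨y.1, hy1⟩ : {x : V // x ≠ v}) = ⟨u₁, h₁⟩ from Subtype.ext e2,
          Sym2.eq_swap]
      · exact absurd (e1.trans e2.symm) hxy1
    rw [hG₂def, SimpleGraph.map_adj]
    exact ⟨⟨⟨x.1, hx1⟩, hmm2 x.1 hx1 x.2⟩, ⟨⟨y.1, hy1⟩, hmm2 y.1 hy1 y.2⟩, hedgeG',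
      Subtype.ext rfl, Subtype.ext rfl⟩
  refine ⟨s', by rw [hs'def]; rwa [Set.ncard_image_of_injective _ Subtype.val_injective], ?_, ?_⟩
  · intro hK
    exact hplanar.1 (minor_unmap φ
      (fun w => by obtain ⟨a, b, c, ha, _⟩ := hdegK5 w; exact ⟨a, ha⟩)
      (minor_transfer hdegK5 hsub htwo hedge' hK))
  · intro hK
    exact hplanar.2 (minor_unmap φ
      (fun w => by obtain ⟨a, b, c, ha, _⟩ := hdegK33 w; exact ⟨a, ha⟩)
      (minor_transfer hdegK33 hsub htwo hedge' hK))

private lemma fromEdge_ncard_le {α : Type*} (a b : α) :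
    (SimpleGraph.fromEdgeSet {s(a, b)}).edgeSet.ncard ≤ 1 := by
  rw [SimpleGraph.edgeSet_fromEdgeSet]
  calc ({s(a, b)} \ {e : Sym2 α | e.IsDiag}).ncard ≤ ({s(a, b)} : Set (Sym2 α)).ncard :=
        Set.ncard_le_ncard Set.diff_subset (Set.finite_singleton _)
    _ = 1 := Set.ncard_singleton _

private lemma fromEdge_diag_empty {α : Type*} (a : α) :
    (SimpleGraph.fromEdgeSet {s(a, a)}).edgeSet = ∅ := by
  rw [SimpleGraph.edgeSet_fromEdgeSet]
  ext e
  simp +contextual [Sym2.mk_isDiag_iff]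


/-- If every graph with `n > 2` vertices and at most `e` edges is 2-apex, then
(1) every graph with `n+1` vertices, at most `e+1` edges and a vertex of degree 1 or 2
is 2-apex, and (2) every graph with `n+1` vertices, at most `e` edges and a vertex of
degree 0 is 2-apex. -/
theorem stmt7 (n e : ℕ) (hn : 2 < n)
    (H : ∀ (V : Type) [Fintype V] (G : SimpleGraph V),
      Fintype.card V = n → G.edgeSet.ncard ≤ e → G.TwoApex) :
    (∀ (V : Type) [Fintype V] (G : SimpleGraph V),
      Fintype.card V = n + 1 → G.edgeSet.ncard ≤ e + 1 →
      (∃ v : V, (G.neighborSet v).ncard = 1 ∨ (G.neighborSet v).ncard = 2) →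
      G.TwoApex) ∧
    (∀ (V : Type) [Fintype V] (G : SimpleGraph V),
      Fintype.card V = n + 1 → G.edgeSet.ncard ≤ e →
      (∃ v : V, (G.neighborSet v).ncard = 0) →
      G.TwoApex) := by
  constructor
  · rintro V _ G hcard hEdge ⟨v, hv | hv⟩
    · obtain ⟨u, hu⟩ := Set.ncard_eq_one.mp hv
      have huadj : G.Adj v u := by
        have h3 : u ∈ G.neighborSet v := by rw [hu]; exact rfl
        exact h3
      have huv : u ≠ v := huadj.ne'
      apply key n e H V G hcard v u u huv huv
      · intro x hx
        have h3 : x ∈ G.neighborSet v := hx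
        rw [hu] at h3
        exact Or.inl h3
      · have hc := count1 G v
        rw [hv] at hc
        rw [SimpleGraph.edgeSet_sup, fromEdge_diag_empty, Set.union_empty]
        omega
    · obtain ⟨u₁, u₂, hne12, hu⟩ := Set.ncard_eq_two.mp hv
      have h1adj : G.Adj v u₁ := by
        have h3 : u₁ ∈ G.neighborSet v := by rw [hu]; exact Set.mem_insert _ _
        exact h3
      have h2adj : G.Adj v u₂ := by
        have h3 : u₂ ∈ G.neighborSet v := by rw [hu]; exact Set.mem_insert_of_mem _ rfl
        exact h3
      apply key n e H V G hcard v u₁ u₂ h1adj.ne' h2adj.ne'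
      · intro x hx
        have h3 : x ∈ G.neighborSet v := hx
        rw [hu] at h3
        rcases h3 with h3 | h3
        · exact Or.inl h3
        · exact Or.inr h3
      · have hc := count1 G v
        rw [hv] at hc
        rw [SimpleGraph.edgeSet_sup]
        refine le_trans (Set.ncard_union_le _ _) ?_
        have hF := fromEdge_ncard_le (⟨u₁, h1adj.ne'⟩ : {x : V // x ≠ v}) ⟨u₂, h2adj.ne'⟩
        omega
  · rintro V _ G hcard hEdge ⟨v, hv⟩
    have hemp : G.neighborSet v = ∅ := (Set.ncard_eq_zero (Set.toFinite _)).mp hv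
    have hVpos : 1 < Fintype.card V := by omega
    obtain ⟨w, hw⟩ := Fintype.exists_ne_of_one_lt_card hVpos v
    apply key n e H V G hcard v w w hw hw
    · intro x hx
      have h3 : x ∈ G.neighborSet v := hx
      rw [hemp] at h3
      exact absurd h3 (Set.notMem_empty x)
    · have hc := count1 G v
      rw [hv] at hc
      rw [SimpleGraph.edgeSet_sup, fromEdge_diag_empty, Set.union_empty]
      omega
end

section
/- Every connected non-planar finite simple graph G on at least 6 vertices has at least |G| + 3 edges, where |G| denotes the number of vertices of G. -/
open SimpleGraph in
lemma walk_reach {V : Type*} {G G' : SimpleGraph V}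
    (h : ∀ a b, G.Adj a b → G'.Reachable a b) :
    ∀ {a b : V}, G.Walk a b → G'.Reachable a b := by
  intro a b p
  induction p with
  | nil => exact Reachable.refl _
  | cons h' _ ih => exact (h _ _ h').trans ih

-- deleting a non-bridge edge keeps connectivity
lemma conn_delete {V : Type*} {G : SimpleGraph V} {v w : V}
    (hc : G.Connected)
    (hreach : (G \ SimpleGraph.fromEdgeSet {s(v, w)}).Reachable v w) :
    (G \ SimpleGraph.fromEdgeSet {s(v, w)}).Connected := by
  set G' := G \ SimpleGraph.fromEdgeSet {s(v, w)} with hG'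
  have key : ∀ a b, G.Adj a b → G'.Reachable a b := by
    intro a b hab
    by_cases he : s(a, b) = s(v, w)
    · rcases Sym2.eq_iff.mp he with ⟨rfl, rfl⟩ | ⟨rfl, rfl⟩
      · exact hreach
      · exact hreach.symm
    · exact SimpleGraph.Adj.reachable (by
        rw [hG', SimpleGraph.sdiff_adj, SimpleGraph.fromEdgeSet_adj]
        exact ⟨hab, fun hh => he hh.1⟩)
  rw [SimpleGraph.connected_iff]
  refine ⟨fun a b => ?_, hc.nonempty⟩
  obtain ⟨p⟩ := hc.preconnected a b
  exact walk_reach key p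

lemma conn_card_le_aux {V : Type*} [Fintype V] :
    ∀ (n : ℕ) (G : SimpleGraph V), G.edgeSet.ncard = n → G.Connected →
      Fintype.card V ≤ n + 1 := by
  intro n
  induction n using Nat.strong_induction_on with
  | _ n ih =>
    intro G hn hc
    classical
    haveI : Fintype G.edgeSet := Fintype.ofFinite _
    by_cases ha : G.IsAcyclic
    · have ht : G.IsTree := ⟨hc, ha⟩
      have hcard := ht.card_edgeFinset
      have h1 : 1 ≤ Fintype.card V := by
        haveI := hc.nonempty
        exact Fintype.card_pos
      have h2 : G.edgeSet.ncard = G.edgeFinset.card := by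
        rw [← Set.ncard_coe_finset, SimpleGraph.coe_edgeFinset]
      omega
    · simp only [SimpleGraph.IsAcyclic, not_forall, not_not] at ha
      obtain ⟨u, c, hcyc⟩ := ha
      have hlen := hcyc.three_le_length
      have hne : c.edges ≠ [] := by
        intro h0
        have := c.length_edges
        rw [h0] at this
        simp at this
        omega
      obtain ⟨e, he⟩ := List.exists_mem_of_ne_nil _ hne
      induction e using Sym2.ind with
      | _ v w =>
      obtain ⟨hadj, hreach⟩ :=
        SimpleGraph.adj_and_reachable_delete_edges_iff_exists_cycle.mpr ⟨u, c, hcyc, he⟩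
      have hmem : s(v, w) ∈ G.edgeSet := c.edges_subset_edgeSet he
      set G' := G \ SimpleGraph.fromEdgeSet {s(v, w)} with hG'
      have hconn' : G'.Connected := conn_delete hc hreach
      have hedge : G'.edgeSet = G.edgeSet \ {s(v, w)} := by
        rw [hG', SimpleGraph.edgeSet_sdiff, SimpleGraph.edgeSet_fromEdgeSet,
          SimpleGraph.edgeSet_sdiff_sdiff_isDiag]
      have hfin : G.edgeSet.Finite := Set.toFinite _
      have hpos : 0 < n := by
        rw [← hn]
        exact (Set.ncard_pos hfin).mpr ⟨_, hmem⟩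
      have hcount : G'.edgeSet.ncard = n - 1 := by
        rw [hedge, ← hn]
        rw [Set.ncard_diff_singleton_of_mem hmem]
      have := ih (n - 1) (by omega) G' hcount hconn'
      omega

lemma boundary_of_walk {V : Type*} {G : SimpleGraph V} {S : Set V} :
    ∀ {u v : V}, G.Walk u v → u ∈ S → v ∉ S →
      ∃ a ∈ S, ∃ b, b ∉ S ∧ G.Adj a b := by
  intro u v p
  induction p with
  | nil => intro hu hv; exact absurd hu hv
  | @cons a c d h p ih =>
    intro hu hv
    by_cases hcS : c ∈ S
    · exact ih hcS hv
    · exact ⟨a, hu, c, hcS, h⟩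

lemma induce_singleton_connected {V : Type*} (G : SimpleGraph V) (b : V) :
    (G.induce {b}).Connected := by
  rw [SimpleGraph.connected_iff]
  refine ⟨?_, ⟨⟨b, rfl⟩⟩⟩
  rintro ⟨x, hx⟩ ⟨y, hy⟩
  simp only [Set.mem_singleton_iff] at hx hy
  subst hx; subst hy
  exact SimpleGraph.Reachable.refl _

lemma cover_aux {V W : Type*} [Fintype V] [Nonempty W] (G : SimpleGraph V)
    (hc : G.Connected) :
    ∀ (n : ℕ) (f : W → Set V),
      (Set.univ \ ⋃ w, f w).ncard = n →
      (∀ w, (f w).Nonempty) →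
      (∀ w, (G.induce (f w)).Connected) →
      (Pairwise fun w₁ w₂ => Disjoint (f w₁) (f w₂)) →
      ∃ g : W → Set V, (∀ w, f w ⊆ g w) ∧ (∀ w, (g w).Nonempty) ∧
        (∀ w, (G.induce (g w)).Connected) ∧
        (Pairwise fun w₁ w₂ => Disjoint (g w₁) (g w₂)) ∧ (⋃ w, g w) = Set.univ := by
  intro n
  induction n using Nat.strong_induction_on with
  | _ n ih =>
    intro f hn hne hcon hdisj
    classical
    by_cases hcov : (⋃ w, f w) = Set.univ
    · exact ⟨f, fun w => subset_rfl, hne, hcon, hdisj, hcov⟩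
    · -- there is a vertex outside the union
      obtain ⟨y, -, hy⟩ : ∃ y ∈ Set.univ, y ∉ ⋃ w, f w := by
        by_contra hy
        push_neg at hy
        exact hcov (Set.eq_univ_of_univ_subset fun x hx => hy x hx)
      obtain ⟨w0, x0, hx0⟩ : ∃ w0 x0, x0 ∈ f w0 := by
        obtain ⟨w0⟩ := ‹Nonempty W›
        obtain ⟨x0, hx0⟩ := hne w0
        exact ⟨w0, x0, hx0⟩
      -- boundary edge
      obtain ⟨p⟩ := hc.preconnected x0 y
      obtain ⟨a, haS, b, hbS, hab⟩ :=
        boundary_of_walk (S := ⋃ w, f w) p (Set.mem_iUnion.mpr ⟨w0, hx0⟩) hy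
      obtain ⟨w1, haw1⟩ := Set.mem_iUnion.mp haS
      set g := Function.update f w1 (f w1 ∪ {b}) with hg
      have hsub : ∀ w, f w ⊆ g w := by
        intro w
        by_cases hw : w = w1
        · subst hw; rw [hg, Function.update_self]; exact Set.subset_union_left
        · rw [hg, Function.update_of_ne hw]
      have hbw : ∀ w, b ∉ f w := fun w hbw => hbS (Set.mem_iUnion.mpr ⟨w, hbw⟩)
      have hunion : (⋃ w, g w) = (⋃ w, f w) ∪ {b} := by
        ext x
        simp only [Set.mem_iUnion, Set.mem_union, Set.mem_singleton_iff]
        constructor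
        · rintro ⟨w, hw⟩
          by_cases hww : w = w1
          · subst hww
            rw [hg, Function.update_self] at hw
            rcases hw with h | h
            · exact Or.inl ⟨_, h⟩
            · exact Or.inr h
          · rw [hg, Function.update_of_ne hww] at hw
            exact Or.inl ⟨w, hw⟩
        · rintro (⟨w, hw⟩ | rfl)
          · exact ⟨w, hsub w hw⟩
          · exact ⟨w1, by rw [hg, Function.update_self]; exact Or.inr rfl⟩
      have hpos : 0 < n := by
        rw [← hn]
        refine (Set.ncard_pos (Set.toFinite _)).mpr ⟨y, Set.mem_diff_of_mem trivial hy⟩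
      have hb' : b ∈ Set.univ \ ⋃ w, f w := Set.mem_diff_of_mem trivial hbS
      have hcount : (Set.univ \ ⋃ w, g w).ncard = n - 1 := by
        rw [hunion, ← Set.diff_diff,
          Set.ncard_diff_singleton_of_mem hb', hn]
      have hne' : ∀ w, (g w).Nonempty := fun w => (hne w).mono (hsub w)
      have hcon' : ∀ w, (G.induce (g w)).Connected := by
        intro w
        by_cases hw : w = w1
        · subst hw
          rw [hg, Function.update_self]
          exact SimpleGraph.connected_induce_union (hcon w).preconnected
            (induce_singleton_connected G b).preconnected haw1 rfl hab
        · rw [hg, Function.update_of_ne hw]; exact hcon w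
      have hdisj' : Pairwise fun w₁ w₂ => Disjoint (g w₁) (g w₂) := by
        intro w w' hww'
        have base : Disjoint (f w) (f w') := hdisj hww'
        by_cases h1 : w = w1
        · subst h1
          rw [hg, Function.update_self, Function.update_of_ne (Ne.symm hww')]
          exact Set.disjoint_union_left.mpr
            ⟨base, Set.disjoint_singleton_left.mpr (hbw w')⟩
        · by_cases h2 : w' = w1
          · subst h2
            rw [hg, Function.update_self, Function.update_of_ne h1]
            exact Set.disjoint_union_right.mpr
              ⟨base, Set.disjoint_singleton_right.mpr (hbw w)⟩
          · rw [hg, Function.update_of_ne h1, Function.update_of_ne h2]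
            exact base
      obtain ⟨g', hsub', h1, h2, h3, h4⟩ :=
        ih (n - 1) (by omega) g hcount hne' hcon' hdisj'
      exact ⟨g', fun w => (hsub w).trans (hsub' w), h1, h2, h3, h4⟩

lemma minor_bound {V W : Type*} [Fintype V] [Fintype W] [Nonempty W]
    (G : SimpleGraph V) (H : SimpleGraph W) (hc : G.Connected)
    (hmin : H.IsMinor G) :
    Fintype.card V + H.edgeSet.ncard ≤ G.edgeSet.ncard + Fintype.card W := by
  classical
  obtain ⟨f, hne0, hcon0, hdisj0, hadj0⟩ := hmin
  obtain ⟨g, hsub, hne, hcon, hdisj, hcov⟩ :=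
    cover_aux G hc _ f rfl hne0 hcon0 hdisj0
  have hadj : ∀ ⦃w₁ w₂⦄, H.Adj w₁ w₂ →
      ∃ v₁ ∈ g w₁, ∃ v₂ ∈ g w₂, G.Adj v₁ v₂ := by
    intro w₁ w₂ h
    obtain ⟨v₁, h1, v₂, h2, h3⟩ := hadj0 h
    exact ⟨v₁, hsub _ h1, v₂, hsub _ h2, h3⟩
  have same : ∀ (x : V) (w w' : W), x ∈ g w → x ∈ g w' → w = w' := by
    intro x w w' h h'
    by_contra hne'
    exact (Set.disjoint_left.mp (hdisj hne') h) h'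
  -- the finsets of edges inside each branch set
  set A : W → Finset (Sym2 V) :=
    fun w => (Sym2.map (Subtype.val : (g w) → V) '' (G.induce (g w)).edgeSet).toFinset
    with hAdef
  have hA : ∀ w, ∀ e ∈ A w, e ∈ G.edgeFinset ∧ ∀ x ∈ e, x ∈ g w := by
    intro w e he
    rw [hAdef, Set.mem_toFinset] at he
    obtain ⟨d, hd, rfl⟩ := he
    induction d using Sym2.ind with
    | _ a b =>
      rw [SimpleGraph.mem_edgeSet] at hd
      constructor
      · rw [Sym2.map_pair_eq, SimpleGraph.mem_edgeFinset, SimpleGraph.mem_edgeSet]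
        exact hd
      · intro x hx
        rw [Sym2.mem_map] at hx
        obtain ⟨y, _, rfl⟩ := hx
        exact y.2
  have hAcard : ∀ w, (g w).ncard ≤ (A w).card + 1 := by
    intro w
    have h1 : (A w).card = (G.induce (g w)).edgeSet.ncard := by
      rw [hAdef, ← Set.ncard_eq_toFinset_card',
        Set.ncard_image_of_injective _ (Sym2.map.injective Subtype.val_injective)]
    have h2 := conn_card_le_aux (G.induce (g w)).edgeSet.ncard (G.induce (g w)) rfl (hcon w)
    have h3 : (g w).ncard = Fintype.card (g w) := by
      rw [Set.ncard_eq_toFinset_card', Set.toFinset_card]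
    omega
  have hAdisj : ∀ w ∈ (Finset.univ : Finset W), ∀ w' ∈ (Finset.univ : Finset W),
      w ≠ w' → Disjoint (A w) (A w') := by
    intro w _ w' _ hww'
    rw [Finset.disjoint_left]
    intro e he he'
    induction e using Sym2.ind with
    | _ a b =>
      have h1 := (hA w _ he).2 a (Sym2.mem_mk_left a b)
      have h2 := (hA w' _ he').2 a (Sym2.mem_mk_left a b)
      exact hww' (same a w w' h1 h2)
  set T : Finset (Sym2 V) := Finset.univ.biUnion A with hT
  have hTsub : T ⊆ G.edgeFinset := by
    intro e he
    rw [hT, Finset.mem_biUnion] at he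
    obtain ⟨w, _, he⟩ := he
    exact (hA w e he).1
  have hTcard : T.card = ∑ w, (A w).card := Finset.card_biUnion hAdisj
  -- vertex count
  have hVcard : Fintype.card V = ∑ w, (g w).ncard := by
    have huniv : (Finset.univ : Finset V) = Finset.univ.biUnion (fun w => (g w).toFinset) := by
      ext x
      simp only [Finset.mem_univ, Finset.mem_biUnion, Set.mem_toFinset, true_iff]
      have : x ∈ ⋃ w, g w := hcov ▸ Set.mem_univ x
      obtain ⟨w, hw⟩ := Set.mem_iUnion.mp this
      exact ⟨w, trivial, hw⟩
    rw [← Finset.card_univ, huniv, Finset.card_biUnion]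
    · apply Finset.sum_congr rfl
      intro w _
      rw [← Set.ncard_eq_toFinset_card']
    · intro w _ w' _ hww'
      rw [Function.onFun, Set.disjoint_toFinset]
      exact hdisj hww'
  have hVne : Nonempty V := hc.nonempty
  have key : ∀ e : Sym2 W, ∃ d : Sym2 V, e ∈ H.edgeSet →
      d ∈ G.edgeFinset ∧ ∃ w1 w2, e = s(w1, w2) ∧
        ∃ v1 ∈ g w1, ∃ v2 ∈ g w2, d = s(v1, v2) := by
    intro e
    induction e using Sym2.ind with
    | _ w1 w2 =>
      by_cases he : H.Adj w1 w2
      · obtain ⟨v1, h1, v2, h2, h3⟩ := hadj he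
        exact ⟨s(v1, v2), fun _ =>
          ⟨by rwa [SimpleGraph.mem_edgeFinset, SimpleGraph.mem_edgeSet],
            w1, w2, rfl, v1, h1, v2, h2, rfl⟩⟩
      · exact ⟨s(Classical.arbitrary V, Classical.arbitrary V),
          fun h => absurd (H.mem_edgeSet.mp h) he⟩
  set c : Sym2 W → Sym2 V := fun e => Classical.choose (key e) with hcdef
  have hcspec : ∀ e ∈ H.edgeFinset, (c e) ∈ G.edgeFinset ∧ ∃ w1 w2, e = s(w1, w2) ∧
      ∃ v1 ∈ g w1, ∃ v2 ∈ g w2, c e = s(v1, v2) :=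
    fun e he => Classical.choose_spec (key e) (SimpleGraph.mem_edgeFinset.mp he)
  have hBsub : ∀ e ∈ H.edgeFinset, c e ∈ G.edgeFinset \ T := by
    intro e he
    obtain ⟨hmem, w1, w2, rfl, v1, h1, v2, h2, hce⟩ := hcspec e he
    rw [Finset.mem_sdiff]
    refine ⟨hmem, ?_⟩
    intro hT'
    rw [hT, Finset.mem_biUnion] at hT'
    obtain ⟨w, -, hw⟩ := hT'
    have e1 : v1 ∈ g w := (hA w _ hw).2 v1 (by rw [hce]; exact Sym2.mem_mk_left _ _)
    have e2 : v2 ∈ g w := (hA w _ hw).2 v2 (by rw [hce]; exact Sym2.mem_mk_right _ _)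
    have hne12 : w1 ≠ w2 :=
      (H.mem_edgeSet.mp (SimpleGraph.mem_edgeFinset.mp he)).ne
    exact hne12 ((same v1 w1 w h1 e1).trans (same v2 w2 w h2 e2).symm)
  have hinj : Set.InjOn c H.edgeFinset := by
    intro e he e' he' hee
    obtain ⟨-, w1, w2, rfl, v1, h1, v2, h2, hce⟩ := hcspec e he
    obtain ⟨-, w1', w2', rfl, v1', h1', v2', h2', hce'⟩ := hcspec e' he'
    rw [hce, hce'] at hee
    rcases Sym2.eq_iff.mp hee with ⟨rfl, rfl⟩ | ⟨rfl, rfl⟩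
    · rw [same v1 w1 w1' h1 h1', same v2 w2 w2' h2 h2']
    · rw [same v1 w1 w2' h1 h2', same v2 w2 w1' h2 h1', Sym2.eq_swap]
  have hB : H.edgeFinset.card ≤ (G.edgeFinset \ T).card :=
    Finset.card_le_card_of_injOn c hBsub hinj
  have hsplit : (G.edgeFinset \ T).card + T.card = G.edgeFinset.card :=
    Finset.card_sdiff_add_card_eq_card hTsub
  have hsum : ∑ w, (g w).ncard ≤ (∑ w, (A w).card) + Fintype.card W := by
    calc ∑ w, (g w).ncard ≤ ∑ w, ((A w).card + 1) :=
          Finset.sum_le_sum (fun w _ => hAcard w)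
    _ = (∑ w, (A w).card) + Fintype.card W := by
          rw [Finset.sum_add_distrib, Finset.sum_const, Finset.card_univ,
            smul_eq_mul, mul_one]
  have hG : G.edgeSet.ncard = G.edgeFinset.card := by rw [← Set.ncard_coe_finset, SimpleGraph.coe_edgeFinset]
  have hH : H.edgeSet.ncard = H.edgeFinset.card := by rw [← Set.ncard_coe_finset, SimpleGraph.coe_edgeFinset]
  omega

instance : DecidableRel (completeBipartiteGraph (Fin 3) (Fin 3)).Adj :=
  fun v w => decidable_of_iff (v.isLeft ∧ w.isRight ∨ v.isRight ∧ w.isLeft) Iff.rfl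

lemma k5_count : (⊤ : SimpleGraph (Fin 5)).edgeSet.ncard = 10 := by
  rw [Set.ncard_eq_toFinset_card']
  decide

lemma k33_count : (completeBipartiteGraph (Fin 3) (Fin 3)).edgeSet.ncard = 9 := by
  rw [Set.ncard_eq_toFinset_card']
  decide


/-- A connected non-planar graph on at least 6 vertices has at least `|G| + 3` edges. -/
theorem stmt9 {V : Type*} [Fintype V] (G : SimpleGraph V)
    (h6 : 6 ≤ Fintype.card V) (hc : G.Connected) (hnp : ¬ G.IsPlanar) :
    Fintype.card V + 3 ≤ G.edgeSet.ncard := by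
  rw [SimpleGraph.IsPlanar, not_and_or, not_not, not_not] at hnp
  rcases hnp with h5 | h33
  · have hb := minor_bound G (⊤ : SimpleGraph (Fin 5)) hc h5
    rw [k5_count, Fintype.card_fin] at hb
    omega
  · have hb := minor_bound G (completeBipartiteGraph (Fin 3) (Fin 3)) hc h33
    rw [k33_count] at hb
    have : Fintype.card (Fin 3 ⊕ Fin 3) = 6 := by decide
    omega
end

section
/- Let G be a finite simple graph with 9 vertices and 21 edges whose minimum degree is at least 3. Suppose that for every pair of distinct vertices a′, b′ the induced subgraph G − {a′,b′} has at least 11 edges, and that equality holds for at least one such pair. Then there exist distinct vertices a and b such that G − {a,b} has exactly 11 edges, the minimum degree of G − {a,b} is at least 2, and one of the following holds: (i) a has degree 6 and b has degree 5, the degree sequence of G is {6,5,5,5,5,5,5,3,3}, {6,5,5,5,5,5,4,4,3}, or {6,5,5,5,5,4,4,4,4}, and a is adjacent to every vertex of degree 5 (including b); or (ii) a and b both have degree 5 and are not adjacent, and the degree sequence of G is {5,5,5,5,5,5,5,4,3} or {5,5,5,5,5,5,4,4,4}. -/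
open Finset

section Helpers

set_option linter.unusedSectionVars false

variable {V : Type*} [Fintype V] [DecidableEq V] (G : SimpleGraph V) [DecidableRel G.Adj]

theorem my_nbr_ncard (v : V) : (G.neighborSet v).ncard = G.degree v := by
  rw [Set.ncard_eq_toFinset_card', Set.toFinset_card, SimpleGraph.card_neighborSet_eq_degree]

theorem my_image_edgeSet (s : Set V) :
    Sym2.map (Subtype.val : s → V) '' (G.induce s).edgeSet
      = G.edgeSet ∩ {e | ∀ v ∈ e, v ∈ s} := by
  ext e
  constructor
  · rintro ⟨e', he', rfl⟩
    induction e' using Sym2.ind with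
    | _ x y =>
      simp only [SimpleGraph.mem_edgeSet] at he'
      simp only [Sym2.map_pair_eq, Set.mem_inter_iff, SimpleGraph.mem_edgeSet, Set.mem_setOf_eq,
        Sym2.mem_iff]
      exact ⟨he', by rintro v (rfl | rfl) <;> simp⟩
  · induction e using Sym2.ind with
    | _ x y =>
      rintro ⟨hadj, hmem⟩
      simp only [SimpleGraph.mem_edgeSet] at hadj
      have hx : x ∈ s := hmem x (by simp)
      have hy : y ∈ s := hmem y (by simp)
      exact ⟨s(⟨x, hx⟩, ⟨y, hy⟩), by simpa using hadj, by simp⟩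

theorem my_incidence_ncard (v : V) : (G.incidenceSet v).ncard = G.degree v := by
  rw [Set.ncard_eq_toFinset_card', Set.toFinset_card, SimpleGraph.card_incidenceSet_eq_degree]

theorem my_edge_count {a b : V} (hab : a ≠ b) :
    (G.induce ({a, b} : Set V)ᶜ).edgeSet.ncard + (G.degree a + G.degree b) =
      G.edgeSet.ncard + (if G.Adj a b then 1 else 0) := by
  have hinj : Function.Injective (Sym2.map (Subtype.val : (({a,b}:Set V)ᶜ : Set V) → V)) :=
    Sym2.map.injective Subtype.val_injective
  have himg := my_image_edgeSet G (({a,b}:Set V)ᶜ)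
  have h1 : (G.induce ({a, b} : Set V)ᶜ).edgeSet.ncard
      = (G.edgeSet ∩ {e | ∀ v ∈ e, v ∈ ({a,b}:Set V)ᶜ}).ncard := by
    rw [← himg, Set.ncard_image_of_injective _ hinj]
  have h2 : G.edgeSet ∩ {e | ∀ v ∈ e, v ∈ ({a,b}:Set V)ᶜ}
      = G.edgeSet \ (G.incidenceSet a ∪ G.incidenceSet b) := by
    ext e
    induction e using Sym2.ind with
    | _ x y =>
      simp only [Set.mem_inter_iff, Set.mem_diff, Set.mem_setOf_eq, Set.mem_union,
        SimpleGraph.mem_edgeSet, Sym2.mem_iff, Set.mem_compl_iff, Set.mem_insert_iff,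
        Set.mem_singleton_iff, SimpleGraph.mk'_mem_incidenceSet_iff]
      constructor
      · rintro ⟨h, hm⟩
        refine ⟨h, ?_⟩
        have hx := hm x (Or.inl rfl)
        have hy := hm y (Or.inr rfl)
        push_neg at hx hy
        rintro (⟨-, (rfl|rfl)⟩ | ⟨-, (rfl|rfl)⟩) <;> tauto
      · rintro ⟨h, hm⟩
        push_neg at hm
        refine ⟨h, ?_⟩
        rintro v (rfl | rfl) <;>
          · push_neg
            constructor <;> rintro rfl <;> tauto
  have hsub : G.incidenceSet a ∪ G.incidenceSet b ⊆ G.edgeSet :=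
    Set.union_subset (G.incidenceSet_subset a) (G.incidenceSet_subset b)
  have h3 : (G.edgeSet \ (G.incidenceSet a ∪ G.incidenceSet b)).ncard
      + (G.incidenceSet a ∪ G.incidenceSet b).ncard = G.edgeSet.ncard :=
    Set.ncard_diff_add_ncard_of_subset hsub (Set.toFinite _)
  have h4 : (G.incidenceSet a ∪ G.incidenceSet b).ncard
      + (G.incidenceSet a ∩ G.incidenceSet b).ncard
      = G.degree a + G.degree b := by
    rw [Set.ncard_union_add_ncard_inter _ _ (Set.toFinite _) (Set.toFinite _),
      my_incidence_ncard, my_incidence_ncard]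
  have h5 : (G.incidenceSet a ∩ G.incidenceSet b).ncard = if G.Adj a b then 1 else 0 := by
    split_ifs with h
    · rw [G.incidenceSet_inter_incidenceSet_of_adj h, Set.ncard_singleton]
    · rw [G.incidenceSet_inter_incidenceSet_of_not_adj h hab, Set.ncard_empty]
  rw [h1, h2]
  omega

theorem my_induce_nbr (s : Set V) (v : s) :
    ((G.induce s).neighborSet v).ncard = (G.neighborSet ↑v ∩ s).ncard := by
  have : Subtype.val '' ((G.induce s).neighborSet v) = G.neighborSet ↑v ∩ s := by
    ext u
    simp only [Set.mem_image, SimpleGraph.mem_neighborSet, Set.mem_inter_iff]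
    constructor
    · rintro ⟨w, hw, rfl⟩
      exact ⟨by simpa using hw, w.2⟩
    · rintro ⟨hadj, hu⟩
      exact ⟨⟨u, hu⟩, by simpa using hadj, rfl⟩
  rw [← this, Set.ncard_image_of_injective _ Subtype.val_injective]

theorem my_mindeg {a b : V} (hmin : ∀ v, 3 ≤ G.degree v)
    (hnot : ∀ v, G.degree v = 3 → ¬(G.Adj v a ∧ G.Adj v b)) :
    ∀ v : (({a, b} : Set V)ᶜ : Set V),
      2 ≤ ((G.induce (({a, b} : Set V)ᶜ)).neighborSet v).ncard := by
  intro v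
  rw [my_induce_nbr]
  have hdiff : G.neighborSet ↑v ∩ ({a,b} : Set V)ᶜ
      = G.neighborSet ↑v \ (G.neighborSet ↑v ∩ {a, b}) := by
    ext u
    simp only [Set.mem_inter_iff, Set.mem_compl_iff, Set.mem_diff]
    tauto
  rw [hdiff, Set.ncard_diff Set.inter_subset_left (Set.toFinite _)]
  rw [my_nbr_ncard]
  have hd := hmin ↑v
  have hle : (G.neighborSet ↑v ∩ {a, b}).ncard ≤ 2 := by
    calc (G.neighborSet ↑v ∩ {a, b}).ncard ≤ ({a, b} : Set V).ncard :=
          Set.ncard_le_ncard Set.inter_subset_right (Set.toFinite _)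
      _ ≤ 2 := by
          apply le_trans (Set.ncard_insert_le _ _)
          simp
  rcases Nat.lt_or_ge (G.degree ↑v) 4 with h4 | h4
  · have h3 : G.degree ↑v = 3 := le_antisymm (by omega) (hmin _)
    have := hnot ↑v h3
    have hone : (G.neighborSet ↑v ∩ {a, b}).ncard ≤ 1 := by
      by_cases ha : G.Adj ↑v a
      · have hb : ¬ G.Adj ↑v b := fun hb => this ⟨ha, hb⟩
        have : G.neighborSet ↑v ∩ {a, b} ⊆ {a} := by
          rintro u ⟨hu, (rfl | rfl)⟩
          · rfl
          · exact absurd hu hb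
        calc (G.neighborSet ↑v ∩ {a, b}).ncard ≤ ({a} : Set V).ncard :=
              Set.ncard_le_ncard this (Set.toFinite _)
          _ = 1 := Set.ncard_singleton _
      · have : G.neighborSet ↑v ∩ {a, b} ⊆ {b} := by
          rintro u ⟨hu, (rfl | rfl)⟩
          · exact absurd hu ha
          · rfl
        calc (G.neighborSet ↑v ∩ {a, b}).ncard ≤ ({b} : Set V).ncard :=
              Set.ncard_le_ncard this (Set.toFinite _)
          _ = 1 := Set.ncard_singleton _
    omega
  · omega

theorem my_degseq (f : V → ℕ) (c3 c4 c5 c6 : ℕ)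
    (hr : ∀ v, f v = 3 ∨ f v = 4 ∨ f v = 5 ∨ f v = 6)
    (h3 : #(univ.filter fun v => f v = 3) = c3)
    (h4 : #(univ.filter fun v => f v = 4) = c4)
    (h5 : #(univ.filter fun v => f v = 5) = c5)
    (h6 : #(univ.filter fun v => f v = 6) = c6) :
    univ.val.map f = Multiset.replicate c3 3 + Multiset.replicate c4 4
      + Multiset.replicate c5 5 + Multiset.replicate c6 6 := by
  ext k
  rw [Multiset.count_map]
  simp only [Multiset.count_add, Multiset.count_replicate]
  have hcard : ∀ m : ℕ, (Multiset.filter (fun a => f a = m) univ.val).card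
      = #(univ.filter fun v => f v = m) := fun m => rfl
  rcases eq_or_ne k 3 with rfl | hk3
  · rw [show (Multiset.filter (fun a => 3 = f a) univ.val)
        = Multiset.filter (fun a => f a = 3) univ.val from
      Multiset.filter_congr fun a _ => by constructor <;> omega]
    rw [hcard, h3]; norm_num
  rcases eq_or_ne k 4 with rfl | hk4
  · rw [show (Multiset.filter (fun a => 4 = f a) univ.val)
        = Multiset.filter (fun a => f a = 4) univ.val from
      Multiset.filter_congr fun a _ => by constructor <;> omega]
    rw [hcard, h4]; norm_num
  rcases eq_or_ne k 5 with rfl | hk5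
  · rw [show (Multiset.filter (fun a => 5 = f a) univ.val)
        = Multiset.filter (fun a => f a = 5) univ.val from
      Multiset.filter_congr fun a _ => by constructor <;> omega]
    rw [hcard, h5]; norm_num
  rcases eq_or_ne k 6 with rfl | hk6
  · rw [show (Multiset.filter (fun a => 6 = f a) univ.val)
        = Multiset.filter (fun a => f a = 6) univ.val from
      Multiset.filter_congr fun a _ => by constructor <;> omega]
    rw [hcard, h6]; norm_num
  · rw [show (Multiset.filter (fun a => k = f a) univ.val) = 0 from
      Multiset.filter_eq_nil.mpr fun a _ => by have := hr a; omega]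
    simp [hk3.symm, hk4.symm, hk5.symm, hk6.symm]

theorem my_adj_sum (v : V) :
    ∑ u ∈ univ.erase v, (if G.Adj v u then 1 else 0) = G.degree v := by
  rw [← Finset.sum_filter, Finset.sum_const, smul_eq_mul, mul_one]
  rw [show (univ.erase v).filter (fun u => G.Adj v u) = G.neighborFinset v by
    ext u
    simp only [mem_filter, mem_erase, mem_univ, true_and, and_true,
      SimpleGraph.mem_neighborFinset]
    exact ⟨fun h => h.2, fun h => ⟨(G.ne_of_adj h).symm, h⟩⟩]
  rfl

end Helpers

/-- Degree/structure lemma for graphs with 9 vertices, 21 edges, minimum degree at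
least 3 such that every `G - {a',b'}` has at least 11 edges, with equality somewhere. -/
theorem stmt14 {V : Type*} [Fintype V] (G : SimpleGraph V)
    (hV : Fintype.card V = 9) (hE : G.edgeSet.ncard = 21)
    (hmin : ∀ v : V, 3 ≤ (G.neighborSet v).ncard)
    (h11 : ∀ a' b' : V, a' ≠ b' →
      11 ≤ (G.induce (({a', b'} : Set V)ᶜ)).edgeSet.ncard)
    (heq : ∃ a' b' : V, a' ≠ b' ∧
      (G.induce (({a', b'} : Set V)ᶜ)).edgeSet.ncard = 11) :
    ∃ a b : V, a ≠ b ∧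
      (G.induce (({a, b} : Set V)ᶜ)).edgeSet.ncard = 11 ∧
      (∀ v : (({a, b} : Set V)ᶜ : Set V),
        2 ≤ ((G.induce (({a, b} : Set V)ᶜ)).neighborSet v).ncard) ∧
      (((G.neighborSet a).ncard = 6 ∧ (G.neighborSet b).ncard = 5 ∧
        (Finset.univ.val.map (fun v : V => (G.neighborSet v).ncard) ∈
          [({6,5,5,5,5,5,5,3,3} : Multiset ℕ),
           ({6,5,5,5,5,5,4,4,3} : Multiset ℕ),
           ({6,5,5,5,5,4,4,4,4} : Multiset ℕ)]) ∧
        (∀ v : V, (G.neighborSet v).ncard = 5 → G.Adj a v)) ∨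
       ((G.neighborSet a).ncard = 5 ∧ (G.neighborSet b).ncard = 5 ∧ ¬ G.Adj a b ∧
        (Finset.univ.val.map (fun v : V => (G.neighborSet v).ncard) ∈
          [({5,5,5,5,5,5,5,4,3} : Multiset ℕ),
           ({5,5,5,5,5,5,4,4,4} : Multiset ℕ)]))) := by
  classical
  have hdeg : ∀ v : V, (G.neighborSet v).ncard = G.degree v := fun v => my_nbr_ncard G v
  simp only [hdeg] at hmin ⊢
  have card9 : #(univ : Finset V) = 9 := by rw [Finset.card_univ, hV]
  have key : ∀ a b : V, a ≠ b →
      G.degree a + G.degree b ≤ 10 + (if G.Adj a b then 1 else 0) := by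
    intro a b hab
    have h := my_edge_count G hab
    have h2 := h11 a b hab
    rw [hE] at h
    omega
  obtain ⟨a', b', hab', heq'⟩ := heq
  have eqpair : G.degree a' + G.degree b' = 10 + (if G.Adj a' b' then 1 else 0) := by
    have h := my_edge_count G hab'
    rw [hE, heq'] at h
    omega
  have hand : ∑ v, G.degree v = 42 := by
    rw [SimpleGraph.sum_degrees_eq_twice_card_edges]
    rw [Set.ncard_eq_toFinset_card'] at hE
    rw [show G.edgeFinset = G.edgeSet.toFinset from rfl, hE]
  have dmax : ∀ v, G.degree v ≤ 6 := by
    intro v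
    have hsplit : G.degree v + ∑ u ∈ univ.erase v, G.degree u = 42 := by
      rw [← hand]; exact Finset.add_sum_erase univ (fun u => G.degree u) (mem_univ v)
    have hper : ∀ u ∈ univ.erase v,
        G.degree v + G.degree u ≤ 10 + (if G.Adj v u then 1 else 0) := by
      intro u hu
      exact key v u (Ne.symm (Finset.ne_of_mem_erase hu))
    have hsum := Finset.sum_le_sum hper
    rw [Finset.sum_add_distrib, Finset.sum_add_distrib, Finset.sum_const, Finset.sum_const,
      Finset.card_erase_of_mem (mem_univ v), card9, my_adj_sum] at hsum
    simp only [smul_eq_mul] at hsum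
    omega
  have hr : ∀ v : V, G.degree v = 3 ∨ G.degree v = 4 ∨ G.degree v = 5 ∨ G.degree v = 6 := by
    intro v
    have h1 := hmin v
    have h2 := dmax v
    omega
  have hcnt1 : ∀ k : ℕ, #(univ.filter fun v => G.degree v = k)
      = ∑ v : V, (if G.degree v = k then 1 else 0) := by
    intro k
    rw [← Finset.sum_filter, Finset.sum_const, smul_eq_mul, mul_one]
  have hcnt2 : ∀ k : ℕ, #(univ.filter fun v => G.degree v = k) * k
      = ∑ v : V, (if G.degree v = k then k else 0) := by
    intro k
    rw [← Finset.sum_filter, Finset.sum_const, smul_eq_mul]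
  have hsum9 : #(univ.filter fun v => G.degree v = 3) + #(univ.filter fun v => G.degree v = 4)
      + #(univ.filter fun v => G.degree v = 5) + #(univ.filter fun v => G.degree v = 6) = 9 := by
    rw [hcnt1, hcnt1, hcnt1, hcnt1, ← Finset.sum_add_distrib, ← Finset.sum_add_distrib,
      ← Finset.sum_add_distrib]
    calc _ = ∑ _v : V, (1:ℕ) := Finset.sum_congr rfl fun v _ => by
              rcases hr v with h|h|h|h <;> simp [h]
      _ = 9 := by rw [Finset.sum_const, smul_eq_mul, mul_one, card9]
  have hsum42 : #(univ.filter fun v => G.degree v = 3) * 3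
      + #(univ.filter fun v => G.degree v = 4) * 4
      + #(univ.filter fun v => G.degree v = 5) * 5
      + #(univ.filter fun v => G.degree v = 6) * 6 = 42 := by
    rw [hcnt2, hcnt2, hcnt2, hcnt2, ← Finset.sum_add_distrib, ← Finset.sum_add_distrib,
      ← Finset.sum_add_distrib]
    calc _ = ∑ v : V, G.degree v := Finset.sum_congr rfl fun v _ => by
              rcases hr v with h|h|h|h <;> simp [h]
      _ = 42 := hand
  by_cases hex : ∃ a : V, G.degree a = 6
  · obtain ⟨a, ha6⟩ := hex
    have all5adj : ∀ v, G.degree v = 5 → G.Adj a v := by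
      intro v hv5
      by_contra hadj
      have hne : a ≠ v := by intro h; rw [← h] at hv5; omega
      have h := key a v hne
      rw [if_neg hadj] at h
      omega
    have hc6 : #(univ.filter fun v => G.degree v = 6) = 1 := by
      rw [show (univ.filter fun v => G.degree v = 6) = {a} from ?_, Finset.card_singleton]
      apply Finset.eq_singleton_iff_unique_mem.mpr
      refine ⟨by simp [ha6], ?_⟩
      intro u hu
      simp only [mem_filter, mem_univ, true_and] at hu
      by_contra hne
      have h := key u a hne
      by_cases hadj : G.Adj u a <;> simp [hadj, hu, ha6] at h
    have h5sub : (univ.filter fun v => G.degree v = 5) ⊆ G.neighborFinset a := by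
      intro v hv
      simp only [mem_filter, mem_univ, true_and] at hv
      exact (SimpleGraph.mem_neighborFinset _ _ _).mpr (all5adj v hv)
    have hn5le : #(univ.filter fun v => G.degree v = 5) ≤ 6 := by
      calc #(univ.filter fun v => G.degree v = 5) ≤ #(G.neighborFinset a) :=
            Finset.card_le_card h5sub
        _ = 6 := ha6
    have hcases : (#(univ.filter fun v => G.degree v = 3) = 0
          ∧ #(univ.filter fun v => G.degree v = 4) = 4
          ∧ #(univ.filter fun v => G.degree v = 5) = 4)
        ∨ (#(univ.filter fun v => G.degree v = 3) = 1
          ∧ #(univ.filter fun v => G.degree v = 4) = 2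
          ∧ #(univ.filter fun v => G.degree v = 5) = 5)
        ∨ (#(univ.filter fun v => G.degree v = 3) = 2
          ∧ #(univ.filter fun v => G.degree v = 4) = 0
          ∧ #(univ.filter fun v => G.degree v = 5) = 6) := by omega
    -- the set of degree-3 neighbors of a
    set T := univ.filter (fun v => G.degree v = 3 ∧ G.Adj a v) with hTdef
    have hTsub : T ⊆ G.neighborFinset a := by
      intro t ht
      simp only [hTdef, mem_filter, mem_univ, true_and] at ht
      exact (SimpleGraph.mem_neighborFinset _ _ _).mpr ht.2
    have hdisjT : Disjoint T (univ.filter fun v => G.degree v = 5) := by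
      rw [Finset.disjoint_left]
      intro x hx hx5
      simp only [hTdef, mem_filter, mem_univ, true_and] at hx hx5
      omega
    have hTcard6 : #T + #(univ.filter fun v => G.degree v = 5) ≤ 6 := by
      rw [← Finset.card_union_of_disjoint hdisjT]
      calc #(T ∪ univ.filter fun v => G.degree v = 5) ≤ #(G.neighborFinset a) :=
            Finset.card_le_card (Finset.union_subset hTsub h5sub)
        _ = 6 := ha6
    have hT3 : #T ≤ #(univ.filter fun v => G.degree v = 3) :=
      Finset.card_le_card (fun x hx => by
        simp only [hTdef, mem_filter, mem_univ, true_and] at hx ⊢; exact hx.1)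
    have hsumT : ∑ t ∈ T, G.degree t = 3 * #T := by
      rw [Finset.sum_congr rfl (fun t ht => by
        simp only [hTdef, mem_filter, mem_univ, true_and] at ht
        exact ht.1), Finset.sum_const, smul_eq_mul, mul_comm]
    have hbiU : #(T.biUnion fun t => G.neighborFinset t) ≤ 3 * #T := by
      calc #(T.biUnion fun t => G.neighborFinset t) ≤ ∑ t ∈ T, #(G.neighborFinset t) :=
            Finset.card_biUnion_le
        _ = 3 * #T := hsumT
    have hBpos : 0 < #((univ.filter fun v => G.degree v = 5)
        \ T.biUnion fun t => G.neighborFinset t) := by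
      have h := Finset.le_card_sdiff (T.biUnion fun t => G.neighborFinset t)
        (univ.filter fun v => G.degree v = 5)
      omega
    obtain ⟨b, hb⟩ := Finset.card_pos.mp hBpos
    rw [Finset.mem_sdiff] at hb
    obtain ⟨hb5', hbT⟩ := hb
    simp only [mem_filter, mem_univ, true_and] at hb5'
    have hbT' : ∀ t, G.degree t = 3 → G.Adj a t → ¬ G.Adj t b := by
      intro t ht3 hta hadj
      apply hbT
      rw [Finset.mem_biUnion]
      exact ⟨t, by simp [hTdef, ht3, hta], (SimpleGraph.mem_neighborFinset _ _ _).mpr hadj⟩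
    have hadj_ab : G.Adj a b := all5adj b hb5'
    have hne_ab : a ≠ b := G.ne_of_adj hadj_ab
    refine ⟨a, b, hne_ab, ?_, ?_, Or.inl ⟨ha6, hb5', ?_, all5adj⟩⟩
    · have h := my_edge_count G hne_ab
      rw [hE, if_pos hadj_ab, ha6, hb5'] at h
      omega
    · apply my_mindeg G hmin
      rintro v hv3 ⟨hva, hvb⟩
      exact hbT' v hv3 hva.symm hvb
    · rcases hcases with ⟨h3, h4, h5⟩ | ⟨h3, h4, h5⟩ | ⟨h3, h4, h5⟩
      · have hseq := my_degseq (fun v => G.degree v) 0 4 4 1 hr h3 h4 h5 hc6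
        rw [hseq, show (Multiset.replicate 0 3 + Multiset.replicate 4 4
          + Multiset.replicate 4 5 + Multiset.replicate 1 6)
          = ({6,5,5,5,5,4,4,4,4} : Multiset ℕ) from by decide]
        simp
      · have hseq := my_degseq (fun v => G.degree v) 1 2 5 1 hr h3 h4 h5 hc6
        rw [hseq, show (Multiset.replicate 1 3 + Multiset.replicate 2 4
          + Multiset.replicate 5 5 + Multiset.replicate 1 6)
          = ({6,5,5,5,5,5,4,4,3} : Multiset ℕ) from by decide]
        simp
      · have hseq := my_degseq (fun v => G.degree v) 2 0 6 1 hr h3 h4 h5 hc6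
        rw [hseq, show (Multiset.replicate 2 3 + Multiset.replicate 0 4
          + Multiset.replicate 6 5 + Multiset.replicate 1 6)
          = ({6,5,5,5,5,5,5,3,3} : Multiset ℕ) from by decide]
        simp
  · push_neg at hex
    have dmax5 : ∀ v, G.degree v ≤ 5 := by
      intro v
      have h1 := dmax v
      have h2 := hex v
      omega
    have hnadj' : ¬ G.Adj a' b' := by
      intro hadj
      rw [if_pos hadj] at eqpair
      have := dmax5 a'
      have := dmax5 b'
      omega
    rw [if_neg hnadj'] at eqpair
    have ha'5 : G.degree a' = 5 := by have := dmax5 a'; have := dmax5 b'; omega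
    have hb'5 : G.degree b' = 5 := by have := dmax5 a'; have := dmax5 b'; omega
    have hc6 : #(univ.filter fun v => G.degree v = 6) = 0 := by
      rw [Finset.card_eq_zero, Finset.filter_eq_empty_iff]
      intro v _
      have := dmax5 v
      omega
    have hcases : (#(univ.filter fun v => G.degree v = 3) = 0
          ∧ #(univ.filter fun v => G.degree v = 4) = 3
          ∧ #(univ.filter fun v => G.degree v = 5) = 6)
        ∨ (#(univ.filter fun v => G.degree v = 3) = 1
          ∧ #(univ.filter fun v => G.degree v = 4) = 1
          ∧ #(univ.filter fun v => G.degree v = 5) = 7) := by omega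
    -- find a good pair
    obtain ⟨a, b, hab, ha5, hb5, hnadj, hgood⟩ :
        ∃ a b : V, a ≠ b ∧ G.degree a = 5 ∧ G.degree b = 5 ∧ ¬ G.Adj a b ∧
          (∀ v, G.degree v = 3 → ¬(G.Adj v a ∧ G.Adj v b)) := by
      by_cases hx : ∃ x, G.degree x = 3 ∧ G.Adj x a' ∧ G.Adj x b'
      · obtain ⟨x, hx3, hxa, hxb⟩ := hx
        have hn3 : #(univ.filter fun v => G.degree v = 3) = 1 ∧
            #(univ.filter fun v => G.degree v = 5) = 7 := by
          rcases hcases with ⟨h3, _, _⟩ | ⟨h3, _, h5⟩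
          · exfalso
            have : x ∈ univ.filter fun v => G.degree v = 3 := by simp [hx3]
            rw [Finset.card_eq_zero.mp h3] at this
            exact absurd this (Finset.notMem_empty x)
          · exact ⟨h3, h5⟩
        have huniq : ∀ v, G.degree v = 3 → v = x := by
          intro v hv
          exact Finset.card_le_one.mp (le_of_eq hn3.1) v (by simp [hv]) x (by simp [hx3])
        set S := univ.filter (fun v => G.degree v = 5 ∧ ¬ G.Adj x v) with hSdef
        have hSeq : S = (univ.filter fun v => G.degree v = 5) \ G.neighborFinset x := by
          ext v
          simp [hSdef, SimpleGraph.mem_neighborFinset]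
        have hScard : 4 ≤ #S := by
          rw [hSeq]
          have h := Finset.le_card_sdiff (G.neighborFinset x)
            (univ.filter fun v => G.degree v = 5)
          have : #(G.neighborFinset x) = 3 := hx3
          omega
        have ha'S : a' ∉ S := by simp [hSdef, hxa]
        have hb'S : b' ∉ S := by simp [hSdef, hxb]
        have hxS : x ∉ S := by simp [hSdef, hx3]
        have hSmem : ∀ s ∈ S, G.degree s = 5 ∧ ¬ G.Adj x s := by
          intro s hs
          simpa [hSdef] using hs
        by_cases hp : ∀ u ∈ S, ∀ w ∈ insert a' (insert b' S), u ≠ w → G.Adj u w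
        · exfalso
          -- neighborhoods of a' and b' are exactly insert x S
          have hkey : ∀ c : V, G.degree c = 5 → G.Adj x c → (∀ s ∈ S, G.Adj c s) →
              G.neighborFinset c = insert x S ∧ #S = 4 := by
            intro c hc5 hxc hcS
            have hsub : insert x S ⊆ G.neighborFinset c := by
              intro u hu
              rw [Finset.mem_insert] at hu
              rw [SimpleGraph.mem_neighborFinset]
              rcases hu with rfl | hu
              · exact hxc.symm
              · exact hcS u hu
            have hcard : #(insert x S) = #S + 1 := Finset.card_insert_of_notMem hxS
            have hle := Finset.card_le_card hsub
            rw [hcard] at hle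
            have hnc : #(G.neighborFinset c) = 5 := hc5
            have hS4 : #S = 4 := by omega
            refine ⟨(Finset.eq_of_subset_of_card_le hsub ?_).symm, hS4⟩
            rw [hnc, hcard, hS4]
          have hpa : ∀ s ∈ S, G.Adj a' s := by
            intro s hs
            refine hp s hs a' (Finset.mem_insert_self _ _) ?_ |>.symm
            intro h; rw [h] at hs; exact ha'S hs
          have hpb : ∀ s ∈ S, G.Adj b' s := by
            intro s hs
            refine hp s hs b' (by simp) ?_ |>.symm
            intro h; rw [h] at hs; exact hb'S hs
          obtain ⟨hNa', hS4⟩ := hkey a' ha'5 hxa hpa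
          obtain ⟨hNb', -⟩ := hkey b' hb'5 hxb hpb
          -- the seventh degree-5 vertex
          have hins : #(insert a' (insert b' S)) ≤ 6 := by
            calc #(insert a' (insert b' S)) ≤ #(insert b' S) + 1 :=
                  Finset.card_insert_le _ _
              _ ≤ #S + 1 + 1 := by
                  have := Finset.card_insert_le b' S
                  omega
              _ ≤ 6 := by omega
          have hYpos : 0 < #((univ.filter fun v => G.degree v = 5)
              \ insert a' (insert b' S)) := by
            have h := Finset.le_card_sdiff (insert a' (insert b' S))
              (univ.filter fun v => G.degree v = 5)
            omega
          obtain ⟨y, hy⟩ := Finset.card_pos.mp hYpos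
          rw [Finset.mem_sdiff] at hy
          obtain ⟨hy5', hyI⟩ := hy
          simp only [mem_filter, mem_univ, true_and] at hy5'
          rw [Finset.mem_insert, Finset.mem_insert] at hyI
          push_neg at hyI
          obtain ⟨hya', hyb', hyS⟩ := hyI
          have hyx : y ≠ x := by intro h; rw [h] at hy5'; omega
          -- y's neighbors avoid a', b', S, y
          have hnbsub : G.neighborFinset y ⊆ univ \ insert y (insert a' (insert b' S)) := by
            intro u hu
            rw [SimpleGraph.mem_neighborFinset] at hu
            rw [Finset.mem_sdiff, Finset.mem_insert, Finset.mem_insert, Finset.mem_insert]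
            refine ⟨Finset.mem_univ u, ?_⟩
            push_neg
            refine ⟨fun h => (by rw [h] at hu; exact G.irrefl hu), ?_, ?_, ?_⟩
            · intro h
              rw [h] at hu
              have : y ∈ G.neighborFinset a' := (SimpleGraph.mem_neighborFinset _ _ _).mpr hu.symm
              rw [hNa', Finset.mem_insert] at this
              rcases this with h' | h'
              · exact hyx h'
              · exact hyS h'
            · intro h
              rw [h] at hu
              have : y ∈ G.neighborFinset b' := (SimpleGraph.mem_neighborFinset _ _ _).mpr hu.symm
              rw [hNb', Finset.mem_insert] at this
              rcases this with h' | h'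
              · exact hyx h'
              · exact hyS h'
            · intro huS
              -- u's neighborhood is insert a' (insert b' (S.erase u))
              obtain ⟨hu5, -⟩ := hSmem u huS
              have hsubu : insert a' (insert b' (S.erase u)) ⊆ G.neighborFinset u := by
                intro w hw
                rw [Finset.mem_insert, Finset.mem_insert] at hw
                rw [SimpleGraph.mem_neighborFinset]
                rcases hw with rfl | rfl | hw
                · exact (hpa u huS).symm
                · exact (hpb u huS).symm
                · exact (hp u huS w (by simp [Finset.mem_of_mem_erase hw])
                    (Finset.ne_of_mem_erase hw).symm)
              have hcards : #(insert a' (insert b' (S.erase u))) = 5 := by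
                rw [Finset.card_insert_of_notMem, Finset.card_insert_of_notMem,
                  Finset.card_erase_of_mem huS, hS4]
                · intro h; exact hb'S (Finset.mem_of_mem_erase h)
                · rw [Finset.mem_insert]
                  push_neg
                  exact ⟨hab', fun h => ha'S (Finset.mem_of_mem_erase h)⟩
              have hNu : G.neighborFinset u = insert a' (insert b' (S.erase u)) :=
                (Finset.eq_of_subset_of_card_le hsubu (by rw [hcards]; exact le_of_eq hu5)).symm
              have : y ∈ G.neighborFinset u := (SimpleGraph.mem_neighborFinset _ _ _).mpr hu.symm
              rw [hNu, Finset.mem_insert, Finset.mem_insert] at this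
              rcases this with h' | h' | h'
              · exact hya' h'
              · exact hyb' h'
              · exact hyS (Finset.mem_of_mem_erase h')
          have hcard2 : #(univ \ insert y (insert a' (insert b' S))) = 2 := by
            rw [Finset.card_sdiff_of_subset (Finset.subset_univ _), card9]
            rw [Finset.card_insert_of_notMem, Finset.card_insert_of_notMem,
              Finset.card_insert_of_notMem hb'S, hS4]
            · rw [Finset.mem_insert]
              push_neg
              exact ⟨hab', ha'S⟩
            · rw [Finset.mem_insert, Finset.mem_insert]
              push_neg
              exact ⟨hya', hyb', hyS⟩
          have := Finset.card_le_card hnbsub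
          rw [hcard2] at this
          have : G.degree y ≤ 2 := le_trans (le_of_eq rfl) this
          omega
        · push_neg at hp
          obtain ⟨u, huS, w, hwI, huw, hnadj⟩ := hp
          obtain ⟨hu5, hux⟩ := hSmem u huS
          have hw5 : G.degree w = 5 := by
            rw [Finset.mem_insert, Finset.mem_insert] at hwI
            rcases hwI with rfl | rfl | hw
            · exact ha'5
            · exact hb'5
            · exact (hSmem w hw).1
          refine ⟨u, w, huw, hu5, hw5, hnadj, ?_⟩
          intro v hv3 ⟨hvu, _⟩
          rw [huniq v hv3] at hvu
          exact hux hvu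
      · push_neg at hx
        refine ⟨a', b', hab', ha'5, hb'5, hnadj', ?_⟩
        intro v hv3 ⟨hva, hvb⟩
        exact hx v hv3 hva hvb
    refine ⟨a, b, hab, ?_, ?_, Or.inr ⟨ha5, hb5, hnadj, ?_⟩⟩
    · have h := my_edge_count G hab
      rw [hE, if_neg hnadj, ha5, hb5] at h
      omega
    · exact my_mindeg G hmin hgood
    · rcases hcases with ⟨h3, h4, h5⟩ | ⟨h3, h4, h5⟩
      · have hseq := my_degseq (fun v => G.degree v) 0 3 6 0 hr h3 h4 h5 hc6
        rw [hseq, show (Multiset.replicate 0 3 + Multiset.replicate 3 4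
          + Multiset.replicate 6 5 + Multiset.replicate 0 6)
          = ({5,5,5,5,5,5,4,4,4} : Multiset ℕ) from by decide]
        simp
      · have hseq := my_degseq (fun v => G.degree v) 1 1 7 0 hr h3 h4 h5 hc6
        rw [hseq, show (Multiset.replicate 1 3 + Multiset.replicate 1 4
          + Multiset.replicate 7 5 + Multiset.replicate 0 6)
          = ({5,5,5,5,5,5,5,4,3} : Multiset ℕ) from by decide]
        simp
end
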